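/- Let (P, ≤, ·, P#) be a partial combinatory algebra. Let PER(P) be the set of binary relations on P that are downward closed for the componentwise order, symmetric and transitive, ordered by inclusion (this is a complete lattice whose meets are intersections). Define R → T := { (x,x') ∈ P × P | for all (y,y') ∈ R, x·y and x'·y' are defined and (x·y, x'·y') ∈ T }. Then (PER(P), ⊆, →) is an arrow structure compatible with joins (i.e., (⨆_{i ∈ I} R_i) → T = ⨅_{i ∈ I} (R_i → T)), and S := { R ∈ PER(P) | there exists (x,y) ∈ R with x, y ∈ P# } is a separator on it. -/

import Mathlib

/-- The combinator 𝐤 := ⨅ a b, a → (b → a). -/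
def kC {A : Type*} [CompleteLattice A] (arr : A → A → A) : A :=
  ⨅ (a : A) (b : A), arr a (arr b a)

/-- The combinator 𝐬 := ⨅ a b c, (a → (b → c)) → ((a → b) → (a → c)). -/
def sC {A : Type*} [CompleteLattice A] (arr : A → A → A) : A :=
  ⨅ (a : A) (b : A) (c : A),
    arr (arr a (arr b c)) (arr (arr a b) (arr a c))

/-- The combinator 𝐚 := ⨅_{x, B ⊆ Im(→)} (⨅_{b ∈ B} x → b) → (x → ⨅ B). -/
def aC {A : Type*} [CompleteLattice A] (arr : A → A → A) : A :=
  ⨅ (x : A) (B : Set A) (_ : B ⊆ Set.range fun p : A × A => arr p.1 p.2),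
    arr (⨅ b ∈ B, arr x b) (arr x (sInf B))

/-- An arrow structure on a complete lattice: the implication is antitone in its
first argument and monotone in its second. -/
structure IsArrow {A : Type*} [CompleteLattice A] (arr : A → A → A) : Prop where
  mono : ∀ {a a' b b' : A}, a' ≤ a → b ≤ b' → arr a b ≤ arr a' b'

/-- A separator on an arrow structure. -/
structure IsSeparator {A : Type*} [CompleteLattice A] (arr : A → A → A) (S : Set A) : Prop where
  up : ∀ {a b : A}, a ∈ S → a ≤ b → b ∈ S
  mp : ∀ {a b : A}, arr a b ∈ S → a ∈ S → b ∈ S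
  kmem : kC arr ∈ S
  smem : sC arr ∈ S
  amem : aC arr ∈ S

/-- A partial combinatory algebra on a poset, with a filter. -/
structure PCA (P : Type*) [PartialOrder P] where
  app : P → P → Option P
  mono : ∀ {a a' b b' x : P}, app a' b' = some x → a ≤ a' → b ≤ b' →
    ∃ y, app a b = some y ∧ y ≤ x
  filt : Set P
  filt_up : ∀ {a b : P}, a ∈ filt → a ≤ b → b ∈ filt
  filt_app : ∀ {a b c : P}, a ∈ filt → b ∈ filt → app a b = some c → c ∈ filt
  k : P
  s : P
  k_mem : k ∈ filt
  s_mem : s ∈ filt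
  k_spec : ∀ a b : P, ∃ ka, app k a = some ka ∧ app ka b = some a
  s_def : ∀ a b : P, ∃ sa sab, app s a = some sa ∧ app sa b = some sab
  s_spec : ∀ {a b c ac bc x sa sab : P}, app a c = some ac → app b c = some bc →
    app ac bc = some x → app s a = some sa → app sa b = some sab →
    ∃ y, app sab c = some y ∧ y ≤ x

/-- A partial equivalence relation on a poset `P`: a downward closed (for the
componentwise order), symmetric and transitive binary relation. -/
structure PER (P : Type*) [PartialOrder P] where
  rel : Set (P × P)
  lower : IsLowerSet rel
  symm : ∀ {x y : P}, (x, y) ∈ rel → (y, x) ∈ rel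
  trans : ∀ {x y z : P}, (x, y) ∈ rel → (y, z) ∈ rel → (x, z) ∈ rel

namespace PER

variable {P : Type*} [PartialOrder P]

lemma ext' {R T : PER P} (h : R.rel = T.rel) : R = T := by
  cases R; cases T; cases h; rfl

instance : PartialOrder (PER P) where
  le R T := R.rel ⊆ T.rel
  le_refl R := subset_rfl
  le_trans R T U h1 h2 := Set.Subset.trans h1 h2
  le_antisymm R T h1 h2 := ext' (subset_antisymm h1 h2)

/-- Meets of PERs are intersections. -/
instance : InfSet (PER P) where
  sInf s :=
    { rel := {p | ∀ R ∈ s, p ∈ R.rel}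
      lower := by
        intro a b hba ha R hR
        exact R.lower hba (ha R hR)
      symm := by
        intro x y h R hR
        exact R.symm (h R hR)
      trans := by
        intro x y z h1 h2 R hR
        exact R.trans (h1 R hR) (h2 R hR) }

/-- The set of PERs on `P` is a complete lattice whose meets are intersections. -/
instance : CompleteLattice (PER P) :=
  completeLatticeOfInf (PER P) (fun s => by
    constructor
    · intro R hR
      exact fun p hp => hp R hR
    · intro T hT
      exact fun p hp R hR => hT hR hp)

end PER

/-- The implication of PERs over a pca. -/
def perArr {P : Type*} [PartialOrder P] (Q : PCA P) (R T : PER P) : PER P where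
  rel := {p | ∀ q ∈ R.rel, ∃ u v : P,
    Q.app p.1 q.1 = some u ∧ Q.app p.2 q.2 = some v ∧ (u, v) ∈ T.rel}
  lower := by
    intro a b hba ha q hq
    obtain ⟨u, v, hu, hv, huv⟩ := ha q hq
    obtain ⟨u', hu', hule⟩ := Q.mono hu hba.1 le_rfl
    obtain ⟨v', hv', hvle⟩ := Q.mono hv hba.2 le_rfl
    exact ⟨u', v', hu', hv', T.lower ⟨hule, hvle⟩ huv⟩
  symm := by
    intro x y h q hq
    obtain ⟨u, v, hu, hv, huv⟩ := h (q.2, q.1) (R.symm hq)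
    exact ⟨v, u, hv, hu, T.symm huv⟩
  trans := by
    intro x y z h1 h2 q hq
    have hq'q' : (q.2, q.2) ∈ R.rel := R.trans (R.symm hq) hq
    obtain ⟨u, v, hu, hv, huv⟩ := h1 q hq
    obtain ⟨u', v', hu', hv', huv'⟩ := h2 (q.2, q.2) hq'q'
    have huv2 : u' = v := Option.some.inj (hu'.symm.trans hv)
    exact ⟨u, v', hu, hv', T.trans huv (huv2 ▸ huv')⟩


namespace StmtAux

variable {P : Type*} [PartialOrder P]

lemma mem_iInf {ι : Sort*} {f : ι → PER P} {p : P × P} :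
    p ∈ (⨅ i, f i).rel ↔ ∀ i, p ∈ (f i).rel :=
  ⟨fun h i => h (f i) ⟨i, rfl⟩, fun h R hR => by obtain ⟨i, rfl⟩ := hR; exact h i⟩

lemma mem_sInf {s : Set (PER P)} {p : P × P} :
    p ∈ (sInf s).rel ↔ ∀ R ∈ s, p ∈ R.rel := Iff.rfl

/-- Term language for bracket abstraction over a pca. -/
inductive Tm (P : Type*) where
  | var : Bool → Tm P
  | con : P → Tm P
  | ap : Tm P → Tm P → Tm P

variable (Q : PCA P)

/-- Evaluation of a term, `var true ↦ fv`, `var false ↦ yv`. -/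
def eval (fv yv : P) : Tm P → Option P
  | .var b => some (bif b then fv else yv)
  | .con c => some c
  | .ap t u => (eval fv yv t).bind fun a => (eval fv yv u).bind fun b => Q.app a b

noncomputable def sfst (a b : P) : P := (Q.s_def a b).choose
noncomputable def ssnd (a b : P) : P := (Q.s_def a b).choose_spec.choose

lemma s_eq (a b : P) :
    Q.app Q.s a = some (sfst Q a b) ∧ Q.app (sfst Q a b) b = some (ssnd Q a b) :=
  (Q.s_def a b).choose_spec.choose_spec

noncomputable def kel (c : P) : P := (Q.k_spec c c).choose

lemma kel_eq (c : P) : Q.app Q.k c = some (kel Q c) := (Q.k_spec c c).choose_spec.1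

lemma kel_app (c a : P) : Q.app (kel Q c) a = some c := by
  obtain ⟨ka, h1, h2⟩ := Q.k_spec c a
  have : ka = kel Q c := Option.some.inj (h1.symm.trans (kel_eq Q c))
  exact this ▸ h2

/-- The identity-like element `s k k`. -/
noncomputable def iE : P := ssnd Q Q.k Q.k

lemma iE_app (z : P) : ∃ y, Q.app (iE Q) z = some y ∧ y ≤ z := by
  obtain ⟨h1, h2⟩ := s_eq Q Q.k Q.k
  exact Q.s_spec (kel_eq Q z) (kel_eq Q z) (kel_app Q z (kel Q z)) h1 h2

lemma iE_filt : iE Q ∈ Q.filt :=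
  Q.filt_app (Q.filt_app Q.s_mem Q.k_mem (s_eq Q Q.k Q.k).1) Q.k_mem (s_eq Q Q.k Q.k).2

lemma kel_filt {c : P} (hc : c ∈ Q.filt) : kel Q c ∈ Q.filt :=
  Q.filt_app Q.k_mem hc (kel_eq Q c)

lemma ssnd_filt {a b : P} (ha : a ∈ Q.filt) (hb : b ∈ Q.filt) : ssnd Q a b ∈ Q.filt :=
  Q.filt_app (Q.filt_app Q.s_mem ha (s_eq Q a b).1) hb (s_eq Q a b).2

/-- Semantic abstraction of a term (over both variables at once). -/
noncomputable def absF : Tm P → P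
  | .var _ => iE Q
  | .con c => kel Q c
  | .ap t u => ssnd Q (absF t) (absF u)

lemma absF_spec (t : Tm P) : ∀ a v : P, eval Q a a t = some v →
    ∃ w, Q.app (absF Q t) a = some w ∧ w ≤ v := by
  induction t with
  | var b =>
    intro a v h
    simp only [eval] at h
    obtain rfl : v = bif b then a else a := (Option.some.inj h).symm
    cases b <;> exact iE_app Q a
  | con c =>
    intro a v h
    obtain rfl : c = v := Option.some.inj h
    exact ⟨c, kel_app Q c a, le_rfl⟩
  | ap t u iht ihu =>
    intro a v h
    simp only [eval, Option.bind_eq_some_iff] at h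
    obtain ⟨vt, ht, vu, hu, happ⟩ := h
    obtain ⟨wt, hwt, lwt⟩ := iht a vt ht
    obtain ⟨wu, hwu, lwu⟩ := ihu a vu hu
    obtain ⟨w', hw', lw'⟩ := Q.mono happ lwt lwu
    obtain ⟨w, hw, lw⟩ := Q.s_spec hwt hwu hw' (s_eq Q _ _).1 (s_eq Q _ _).2
    exact ⟨w, hw, lw.trans lw'⟩

/-- Collected constants condition. -/
def Cons : Tm P → Prop
  | .var _ => True
  | .con c => c ∈ Q.filt
  | .ap t u => Cons t ∧ Cons u

lemma absF_mem (t : Tm P) (h : Cons Q t) : absF Q t ∈ Q.filt := by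
  induction t with
  | var b => exact iE_filt Q
  | con c => exact kel_filt Q h
  | ap t u iht ihu => exact ssnd_filt Q (iht h.1) (ihu h.2)

/-- Syntactic abstraction of the `false` variable. -/
noncomputable def absY : Tm P → Tm P
  | .var false => .con (iE Q)
  | .var true => .ap (.con Q.k) (.var true)
  | .con c => .ap (.con Q.k) (.con c)
  | .ap t u => .ap (.ap (.con Q.s) (absY t)) (absY u)

lemma absY_cons (t : Tm P) (h : Cons Q t) : Cons Q (absY Q t) := by
  induction t with
  | var b =>
    cases b with
    | false => exact iE_filt Q
    | true => exact ⟨Q.k_mem, trivial⟩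
  | con c => exact ⟨Q.k_mem, h⟩
  | ap t u iht ihu => exact ⟨⟨Q.s_mem, iht h.1⟩, ihu h.2⟩

lemma absY_spec (t : Tm P) (f : P) :
    ∃ g, eval Q f f (absY Q t) = some g ∧
      ∀ y v, eval Q f y t = some v → ∃ w, Q.app g y = some w ∧ w ≤ v := by
  induction t with
  | var b =>
    cases b
    · refine ⟨iE Q, rfl, fun y v h => ?_⟩
      obtain rfl : y = v := Option.some.inj h
      exact iE_app Q y
    · refine ⟨kel Q f, ?_, fun y v h => ?_⟩
      · simp only [absY, eval, Option.bind_some, cond_true]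
        exact kel_eq Q f
      · obtain rfl : f = v := Option.some.inj h
        exact ⟨f, kel_app Q f y, le_rfl⟩
  | con c =>
    refine ⟨kel Q c, ?_, fun y v h => ?_⟩
    · simp only [absY, eval, Option.bind_some]
      exact kel_eq Q c
    · obtain rfl : c = v := Option.some.inj h
      exact ⟨c, kel_app Q c y, le_rfl⟩
  | ap t u iht ihu =>
    obtain ⟨gt, hgt, ht⟩ := iht
    obtain ⟨gu, hgu, hu⟩ := ihu
    refine ⟨ssnd Q gt gu, ?_, fun y v h => ?_⟩
    · simp only [absY, eval, Option.bind_some, hgt, hgu, Option.bind_eq_some_iff]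
      exact ⟨sfst Q gt gu, (s_eq Q gt gu).1, (s_eq Q gt gu).2⟩
    · simp only [eval, Option.bind_eq_some_iff] at h
      obtain ⟨vt, hvt, vu, hvu, happ⟩ := h
      obtain ⟨wt, hwt, lwt⟩ := ht y vt hvt
      obtain ⟨wu, hwu, lwu⟩ := hu y vu hvu
      obtain ⟨w', hw', lw'⟩ := Q.mono happ lwt lwu
      obtain ⟨w, hw, lw⟩ := Q.s_spec hwt hwu hw' (s_eq Q gt gu).1 (s_eq Q gt gu).2
      exact ⟨w, hw, lw.trans lw'⟩

/-- The realizer for the combinator 𝐚: an element `p` of the filter with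
`p·f` and `p·f·y` always defined, and `p·f·y·z ≤ (f·y)·z` whenever defined. -/
lemma a_realizer : ∃ p ∈ Q.filt, ∀ f : P, ∃ pf, Q.app p f = some pf ∧
    ∀ y : P, ∃ u, Q.app pf y = some u ∧
      ∀ z fy fyz, Q.app f y = some fy → Q.app fy z = some fyz →
        ∃ w, Q.app u z = some w ∧ w ≤ fyz := by
  -- the term  s (s (k f) (k y)) i
  set U : Tm P := .ap (.ap (.con Q.s)
      (.ap (.ap (.con Q.s) (.ap (.con Q.k) (.var true))) (.ap (.con Q.k) (.var false))))
    (.con (iE Q)) with hUdef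
  have hcons : Cons Q U :=
    ⟨⟨Q.s_mem, ⟨⟨Q.s_mem, ⟨Q.k_mem, trivial⟩⟩, ⟨Q.k_mem, trivial⟩⟩⟩, iE_filt Q⟩
  refine ⟨absF Q (absY Q U), absF_mem Q _ (absY_cons Q U hcons), fun f => ?_⟩
  obtain ⟨g, hg, hgy⟩ := absY_spec Q U f
  obtain ⟨pf, hpf, hple⟩ := absF_spec Q (absY Q U) f g hg
  refine ⟨pf, hpf, fun y => ?_⟩
  -- evaluate U at (f, y)
  have hU : eval Q f y U = some (ssnd Q (ssnd Q (kel Q f) (kel Q y)) (iE Q)) := by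
    simp only [hUdef, eval, Option.bind_some, cond_true, cond_false, kel_eq,
      Option.bind_eq_some_iff]
    exact ⟨sfst Q (ssnd Q (kel Q f) (kel Q y)) (iE Q),
      ⟨ssnd Q (kel Q f) (kel Q y),
        ⟨sfst Q (kel Q f) (kel Q y), (s_eq Q _ _).1, (s_eq Q _ _).2⟩,
        (s_eq Q _ _).1⟩, (s_eq Q _ _).2⟩
  obtain ⟨w, hgw, hwle⟩ := hgy y _ hU
  obtain ⟨u, hu, hule⟩ := Q.mono hgw hple le_rfl
  refine ⟨u, hu, fun z fy fyz hfy hfyz => ?_⟩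
  -- app of (s (s (kf) (ky)) i) to z
  obtain ⟨ez, hez, hezle⟩ :=
    Q.s_spec (kel_app Q f z) (kel_app Q y z) hfy (s_eq Q (kel Q f) (kel Q y)).1
      (s_eq Q (kel Q f) (kel Q y)).2
  obtain ⟨iz, hiz, hizle⟩ := iE_app Q z
  obtain ⟨w1, hw1, hw1le⟩ := Q.mono hfyz hezle hizle
  obtain ⟨w2, hw2, hw2le⟩ :=
    Q.s_spec hez hiz hw1 (s_eq Q (ssnd Q (kel Q f) (kel Q y)) (iE Q)).1
      (s_eq Q (ssnd Q (kel Q f) (kel Q y)) (iE Q)).2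
  obtain ⟨w3, hw3, hw3le⟩ := Q.mono hw2 (hule.trans hwle) le_rfl
  exact ⟨w3, hw3, hw3le.trans (hw2le.trans hw1le)⟩

end StmtAux

open StmtAux

/-- Theorem 3.11: PERs over a pca form an arrow structure compatible with joins,
and the PERs containing a pair of elements of the filter form a separator on it. -/
theorem stmt3 {P : Type*} [PartialOrder P] (Q : PCA P) :
    IsArrow (perArr Q) ∧
    (∀ {ι : Type*} (R : ι → PER P) (T : PER P),
      perArr Q (⨆ i, R i) T = ⨅ i, perArr Q (R i) T) ∧
    IsSeparator (perArr Q)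
      {R : PER P | ∃ p ∈ R.rel, p.1 ∈ Q.filt ∧ p.2 ∈ Q.filt} := by
  have arrow : IsArrow (perArr Q) := by
    constructor
    intro a a' b b' ha hb p hp q hq
    obtain ⟨u, v, h1, h2, h3⟩ := hp q (ha hq)
    exact ⟨u, v, h1, h2, hb h3⟩
  refine ⟨arrow, ?_, ?_⟩
  · -- compatibility with joins
    intro ι R T
    apply le_antisymm
    · exact le_iInf fun i => arrow.mono (le_iSup R i) le_rfl
    · intro p hp
      have hp' : ∀ i, p ∈ (perArr Q (R i) T).rel := mem_iInf.mp hp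
      -- auxiliary PER
      set U : PER P :=
        { rel := {q | ∀ a b : P, (a = p.1 ∨ a = p.2) → (b = p.1 ∨ b = p.2) →
            ∃ u v : P, Q.app a q.1 = some u ∧ Q.app b q.2 = some v ∧ (u, v) ∈ T.rel}
          lower := by
            intro q q' hle hq a b ha hb
            obtain ⟨u, v, hu, hv, huv⟩ := hq a b ha hb
            obtain ⟨u', hu', hule⟩ := Q.mono hu le_rfl hle.1
            obtain ⟨v', hv', hvle⟩ := Q.mono hv le_rfl hle.2
            exact ⟨u', v', hu', hv', T.lower ⟨hule, hvle⟩ huv⟩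
          symm := by
            intro x y h a b ha hb
            obtain ⟨u, v, hu, hv, huv⟩ := h b a hb ha
            exact ⟨v, u, hv, hu, T.symm huv⟩
          trans := by
            intro x y z h1 h2 a b ha hb
            obtain ⟨u, v, hu, hv, huv⟩ := h1 a p.1 ha (Or.inl rfl)
            obtain ⟨u', v', hu', hv', huv'⟩ := h2 p.1 b (Or.inl rfl) hb
            have : u' = v := Option.some.inj (hu'.symm.trans hv)
            exact ⟨u, v', hu, hv', T.trans huv (this ▸ huv')⟩ } with hUdef
      have hRU : ∀ i, R i ≤ U := by
        intro i q hq a b ha hb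
        have h11 := hp' i
        have h21 := (perArr Q (R i) T).symm h11
        have h1 : ((p.1, p.1) : P × P) ∈ (perArr Q (R i) T).rel :=
          (perArr Q (R i) T).trans h11 h21
        have h2 : ((p.2, p.2) : P × P) ∈ (perArr Q (R i) T).rel :=
          (perArr Q (R i) T).trans h21 h11
        rcases ha with rfl | rfl <;> rcases hb with rfl | rfl
        · exact h1 q hq
        · exact h11 q hq
        · exact h21 q hq
        · exact h2 q hq
      have hsup : (⨆ i, R i) ≤ U := iSup_le hRU
      intro q hq
      exact hsup hq p.1 p.2 (Or.inl rfl) (Or.inr rfl)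
  · -- the separator
    constructor
    · rintro a b ⟨q, hq, h1, h2⟩ hab
      exact ⟨q, hab hq, h1, h2⟩
    · rintro a b ⟨q, hq, h1, h2⟩ ⟨r, hr, h3, h4⟩
      obtain ⟨u, v, hu, hv, huv⟩ := hq r hr
      exact ⟨(u, v), huv, Q.filt_app h1 h3 hu, Q.filt_app h2 h4 hv⟩
    · -- 𝐤
      refine ⟨(Q.k, Q.k), ?_, Q.k_mem, Q.k_mem⟩
      refine mem_iInf.mpr fun a => mem_iInf.mpr fun b => fun q hq => ?_
      exact ⟨kel Q q.1, kel Q q.2, kel_eq Q q.1, kel_eq Q q.2,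
        fun r hr => ⟨q.1, q.2, kel_app Q q.1 r.1, kel_app Q q.2 r.2, hq⟩⟩
    · -- 𝐬
      refine ⟨(Q.s, Q.s), ?_, Q.s_mem, Q.s_mem⟩
      refine mem_iInf.mpr fun a => mem_iInf.mpr fun b => mem_iInf.mpr fun c =>
        fun q hq => ?_
      refine ⟨sfst Q q.1 q.1, sfst Q q.2 q.2, (s_eq Q q.1 q.1).1, (s_eq Q q.2 q.2).1,
        fun g hg => ?_⟩
      have e1 : sfst Q q.1 g.1 = sfst Q q.1 q.1 :=
        Option.some.inj ((s_eq Q q.1 g.1).1.symm.trans (s_eq Q q.1 q.1).1)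
      have e2 : sfst Q q.2 g.2 = sfst Q q.2 q.2 :=
        Option.some.inj ((s_eq Q q.2 g.2).1.symm.trans (s_eq Q q.2 q.2).1)
      refine ⟨ssnd Q q.1 g.1, ssnd Q q.2 g.2, e1 ▸ (s_eq Q q.1 g.1).2,
        e2 ▸ (s_eq Q q.2 g.2).2, fun y hy => ?_⟩
      obtain ⟨fy, fy', hfy, hfy', hff⟩ := hq y hy
      obtain ⟨gy, gy', hgy, hgy', hgg⟩ := hg y hy
      obtain ⟨w, w', hw, hw', hww⟩ := hff (gy, gy') hgg
      obtain ⟨t, ht, htle⟩ := Q.s_spec hfy hgy hw (s_eq Q q.1 g.1).1 (s_eq Q q.1 g.1).2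
      obtain ⟨t', ht', htle'⟩ :=
        Q.s_spec hfy' hgy' hw' (s_eq Q q.2 g.2).1 (s_eq Q q.2 g.2).2
      exact ⟨t, t', ht, ht', c.lower ⟨htle, htle'⟩ hww⟩
    · -- 𝐚
      obtain ⟨p, hpf, hp⟩ := a_realizer Q
      refine ⟨(p, p), ?_, hpf, hpf⟩
      refine mem_iInf.mpr fun x => mem_iInf.mpr fun B => mem_iInf.mpr fun hB =>
        fun q hq => ?_
      obtain ⟨pf, hpf1, hy1⟩ := hp q.1
      obtain ⟨pf', hpf2, hy2⟩ := hp q.2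
      refine ⟨pf, pf', hpf1, hpf2, fun y hy => ?_⟩
      obtain ⟨u, hu, hrest⟩ := hy1 y.1
      obtain ⟨u', hu', hrest'⟩ := hy2 y.2
      refine ⟨u, u', hu, hu', ?_⟩
      intro b hbB
      obtain ⟨⟨R, T⟩, rfl⟩ := hB hbB
      have hq' : q ∈ (perArr Q x (perArr Q R T)).rel :=
        mem_iInf.mp (mem_iInf.mp hq (perArr Q R T)) hbB
      obtain ⟨fy, fy', hfy, hfy', hff⟩ := hq' y hy
      intro z hz
      obtain ⟨w, w', hw, hw', hww⟩ := hff z hz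
      obtain ⟨t, ht, htle⟩ := hrest z.1 fy w hfy hw
      obtain ⟨t', ht', htle'⟩ := hrest' z.2 fy' w' hfy' hw'
      exact ⟨t, t', ht, ht', T.lower ⟨htle, htle'⟩ hww⟩
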